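/- Let m ≥ 2 and d with 4d ≥ 2m. Any homogeneous symmetric polynomial p(x₁,...,xₘ) of degree 4d (with deg xᵢ = 4) lying in the intersection, over all partitions {1,...,m} = S₁ ⊔ S₂ with both parts nonempty, of V_{S₁}^{<2|S₁|} ⊗ V_{S₂} + V_{S₁} ⊗ V_{S₂}^{<2|S₂|}, is a scalar multiple of the power sum x₁^d + ⋯ + xₘ^d. -/

import Mathlib

open MvPolynomial

lemma supp_of_span {m : ℕ} {p : MvPolynomial (Fin m) ℚ} {P : (Fin m →₀ ℕ) → Prop}
    (h : p ∈ Submodule.span ℚ {q : MvPolynomial (Fin m) ℚ |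
      ∃ t : Fin m →₀ ℕ, q = monomial t (1 : ℚ) ∧ P t}) :
    ∀ t ∈ p.support, P t := by
  induction h using Submodule.span_induction with
  | mem q hq =>
    obtain ⟨t, rfl, hP⟩ := hq
    intro u hu
    have := MvPolynomial.support_monomial_subset hu
    simp at this
    subst this; exact hP
  | zero => simp
  | add x y _ _ hx hy =>
    intro u hu
    have := MvPolynomial.support_add (p := x) (q := y) hu
    simp only [Finset.mem_union] at this
    rcases this with h | h
    · exact hx u h
    · exact hy u h
  | smul c x _ hx =>
    intro u hu
    exact hx u (MvPolynomial.support_smul hu)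

theorem stmt_1 (m d : ℕ) (hm : 2 ≤ m) (hd : 2 * m ≤ 4 * d)
    (p : MvPolynomial (Fin m) ℚ)
    (hhom : p.IsHomogeneous d)
    (hsym : ∀ σ : Equiv.Perm (Fin m), rename σ p = p)
    (hU : ∀ S : Finset (Fin m), S ≠ ∅ → S ≠ Finset.univ →
      p ∈ Submodule.span ℚ {q : MvPolynomial (Fin m) ℚ |
        ∃ t : Fin m →₀ ℕ, q = monomial t (1 : ℚ) ∧
          (4 * ∑ i ∈ S, t i < 2 * S.card ∨ 4 * ∑ i ∈ Sᶜ, t i < 2 * Sᶜ.card)}) :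
    ∃ c : ℚ, p = c • ∑ i : Fin m, X i ^ d := by
  have hd1 : 1 ≤ d := by omega
  -- every exponent vector in the support sums to d
  have hsum : ∀ t ∈ p.support, ∑ i : Fin m, t i = d := by
    intro t ht
    have h := hhom (MvPolynomial.mem_support_iff.mp ht)
    rw [← h, Finsupp.weight_apply, Finsupp.sum]
    rw [Finset.sum_subset (Finset.subset_univ t.support)
      (fun x _ hx => by simpa using Finsupp.notMem_support_iff.mp hx)]
    simp
  -- every t in the support is single i d
  have key : ∀ t ∈ p.support, ∃ i : Fin m, t = Finsupp.single i d := by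
    intro t ht
    by_cases hcard : t.support.card ≤ 1
    · interval_cases h : t.support.card
      · exfalso
        have : t = 0 := Finsupp.card_support_eq_zero.mp h
        subst this
        have := hsum 0 ht
        simp at this
        omega
      · obtain ⟨i, hi⟩ := Finset.card_eq_one.mp h
        refine ⟨i, ?_⟩
        have htd : t i = d := by
          have h2 : ∑ k : Fin m, t k = ∑ k ∈ t.support, t k :=
            (Finset.sum_subset (Finset.subset_univ _)
              (fun x _ hx => Finsupp.notMem_support_iff.mp hx)).symm
          rw [← hsum t ht, h2, hi, Finset.sum_singleton]
        ext j
        by_cases hji : j = i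
        · subst hji; simp [htd]
        · have hj0 : j ∉ t.support := by rw [hi]; simpa using hji
          simp [Finsupp.notMem_support_iff.mp hj0, Finsupp.single_apply,
            Ne.symm hji]
    · -- at least two nonzero entries: contradiction
      exfalso
      push_neg at hcard
      obtain ⟨i, hi, j, hj, hij⟩ := Finset.one_lt_card.mp hcard
      have hti : 1 ≤ t i := Nat.one_le_iff_ne_zero.mpr (Finsupp.mem_support_iff.mp hi)
      have htid : t i ≤ d := by
        rw [← hsum t ht]
        exact Finset.single_le_sum (fun k _ => Nat.zero_le _) (Finset.mem_univ i)
      obtain ⟨Z, hZsub, hZcard⟩ := Finset.exists_subset_card_eq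
        (min_le_right (2 * t i - 1) (t.supportᶜ.card))
      set S : Finset (Fin m) := insert i Z with hS
      have hiZ : i ∉ Z := fun h => (Finset.mem_compl.mp (hZsub h)) hi
      have hjS : j ∉ S := by
        simp only [hS, Finset.mem_insert]
        push_neg
        exact ⟨hij.symm, fun h => (Finset.mem_compl.mp (hZsub h)) hj⟩
      have hScard : S.card = Z.card + 1 := by rw [hS, Finset.card_insert_of_notMem hiZ]
      have hZle : Z.card ≤ 2 * t i - 1 := hZcard.trans_le (min_le_left _ _)
      -- sum over S is t i
      have hSsum : ∑ k ∈ S, t k = t i := by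
        rw [hS, Finset.sum_insert hiZ, Finset.sum_eq_zero, add_zero]
        intro k hk
        simpa using hZsub hk
      have hSc : ∑ k ∈ Sᶜ, t k = d - t i := by
        have := Finset.sum_add_sum_compl S t
        rw [hsum t ht, hSsum] at this
        omega
      have hcompl : Sᶜ.card = m - S.card := by
        rw [Finset.card_compl, Fintype.card_fin]
      have hSne : S ≠ ∅ := by simp [hS]
      have hSnu : S ≠ Finset.univ := fun h => hjS (h ▸ Finset.mem_univ j)
      have hcond := supp_of_span (hU S hSne hSnu) t ht
      rw [hSsum, hSc] at hcond
      -- first disjunct impossible since S.card ≤ 2 * t i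
      have hS2 : S.card ≤ 2 * t i := by omega
      -- second disjunct: two cases
      by_cases hcase : Z.card = 2 * t i - 1
      · -- Sᶜ.card = m - 2 t i, and 2d ≥ m
        omega
      · -- Z = t.supportᶜ
        have hZeq : Z = t.supportᶜ := Finset.eq_of_subset_of_card_le hZsub (by omega)
        have hge : Sᶜ.card ≤ ∑ k ∈ Sᶜ, t k := by
          have h1 : ∀ k ∈ Sᶜ, 1 ≤ t k := by
            intro k hk
            have hkS : k ∉ S := Finset.mem_compl.mp hk
            have hks : k ∈ t.support := by
              by_contra hns
              exact hkS (Finset.mem_insert_of_mem (hZeq ▸ Finset.mem_compl.mpr hns))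
            exact Nat.one_le_iff_ne_zero.mpr (Finsupp.mem_support_iff.mp hks)
          calc Sᶜ.card = ∑ _k ∈ Sᶜ, 1 := by simp
            _ ≤ ∑ k ∈ Sᶜ, t k := Finset.sum_le_sum h1
        rw [hSc] at hge
        omega
  -- symmetry: all coefficients of single i d are equal
  have i0 : Fin m := ⟨0, by omega⟩
  set c : ℚ := coeff (Finsupp.single i0 d) p with hc
  have hcoeff : ∀ i : Fin m, coeff (Finsupp.single i d) p = c := by
    intro i
    have hσ := hsym (Equiv.swap i0 i)
    calc coeff (Finsupp.single i d) p
        = coeff (Finsupp.mapDomain (Equiv.swap i0 i) (Finsupp.single i0 d))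
            (rename (Equiv.swap i0 i) p) := by
          rw [hσ, Finsupp.mapDomain_single, Equiv.swap_apply_left]
      _ = coeff (Finsupp.single i0 d) p :=
          coeff_rename_mapDomain _ (Equiv.injective _) _ _
  refine ⟨c, ?_⟩
  ext u
  have hrhs : coeff u (c • ∑ i : Fin m, X (R := ℚ) i ^ d)
      = c * ∑ i : Fin m, if Finsupp.single i d = u then (1:ℚ) else 0 := by
    rw [MvPolynomial.coeff_smul, MvPolynomial.coeff_sum]
    congr 1
    refine Finset.sum_congr rfl (fun i _ => ?_)
    rw [MvPolynomial.X_pow_eq_monomial, MvPolynomial.coeff_monomial]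
  by_cases hex : ∃ i : Fin m, u = Finsupp.single i d
  · obtain ⟨i, rfl⟩ := hex
    rw [hrhs, hcoeff i]
    have : ∑ j : Fin m, (if Finsupp.single j d = Finsupp.single i d then (1:ℚ) else 0) = 1 := by
      rw [Finset.sum_congr rfl (fun j _ => ?_), Finset.sum_ite_eq' Finset.univ i (fun _ => (1:ℚ))]
      · simp
      · congr 1
        simp only [eq_iff_iff]
        constructor
        · intro h
          exact Finsupp.single_left_injective (by omega) h
        · intro h; rw [h]
    rw [this, mul_one]
  · have hu0 : coeff u p = 0 := by
      by_contra h
      exact hex (let ⟨i, hi⟩ := key u (MvPolynomial.mem_support_iff.mpr h); ⟨i, hi⟩)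
    rw [hu0, hrhs]
    rw [Finset.sum_eq_zero, mul_zero]
    intro i _
    rw [if_neg (fun h => hex ⟨i, h.symm⟩)]
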